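/- Let α ∈ 𝕋^{d'} satisfy the Diophantine condition |⟨k,α⟩ − l| > C|k|^{-n} for all nonzero k ∈ ℤ^{d'}, l ∈ ℤ. Then for every f in the Sobolev space H^n(𝕋^{d'}) with ∫ f dλ = 0 there exists g ∈ L^2(𝕋^{d'}) solving the cohomological equation f = g − g∘R_α, with ‖g‖_{L^2} ≤ C'‖f‖_{H^n} for a constant C' depending only on C, n, d'. Consequently, for every h ∈ H^n(𝕋^{d'}) and every J ≥ 1, ‖∑_{j=1}^J h∘R_α^j − J∫h dλ‖_{L^2} ≤ C''‖h‖_{H^n}. -/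

import Mathlib

open scoped Real

lemma aux_norm_one_sub_exp (θ : ℝ) :
    ‖(1 : ℂ) - Complex.exp (2 * (π : ℂ) * Complex.I * (θ : ℂ))‖ = 2 * |Real.sin (π * θ)| := by
  have h : 2 * (π : ℂ) * Complex.I * (θ : ℂ) = ((2 * π * θ : ℝ) : ℂ) * Complex.I := by
    push_cast; ring
  rw [h, Complex.exp_mul_I]
  have h2 : (1 : ℂ) - (Complex.cos ((2 * π * θ : ℝ) : ℂ) + Complex.sin ((2 * π * θ : ℝ) : ℂ) * Complex.I)
      = ((1 - Real.cos (2 * π * θ) : ℝ) : ℂ) + ((-(Real.sin (2 * π * θ)) : ℝ) : ℂ) * Complex.I := by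
    rw [← Complex.ofReal_cos, ← Complex.ofReal_sin]; push_cast; ring
  rw [h2]
  rw [Complex.norm_def, Complex.normSq_add_mul_I]
  have key : (1 - Real.cos (2 * π * θ)) ^ 2 + (-(Real.sin (2 * π * θ))) ^ 2
      = (2 * Real.sin (π * θ)) ^ 2 := by
    have h3 : Real.sin (π * θ) ^ 2 = 1 / 2 - Real.cos (2 * π * θ) / 2 := by
      have := Real.sin_sq_eq_half_sub (π * θ)
      rwa [show 2 * (π * θ) = 2 * π * θ by ring] at this
    have h4 := Real.sin_sq_add_cos_sq (2 * π * θ)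
    nlinarith [h3, h4]
  rw [key, Real.sqrt_sq_eq_abs, abs_mul]
  norm_num

lemma aux_two_abs_le_abs_sin {t : ℝ} (ht : |t| ≤ 1 / 2) :
    2 * |t| ≤ |Real.sin (π * t)| := by
  have hpi := Real.pi_pos
  have h1 : Real.sin (π * |t|) = |Real.sin (π * t)| := by
    rcases abs_cases t with ⟨h, _⟩ | ⟨h, _⟩
    · rw [h]
      rw [abs_of_nonneg]
      apply Real.sin_nonneg_of_nonneg_of_le_pi
      · positivity
      · nlinarith [abs_nonneg t, ht, h]
    · rw [h, mul_neg, Real.sin_neg]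
      rw [abs_of_nonpos]
      · rw [show π * t = -(π * -t) by ring, Real.sin_neg, neg_nonpos]
        apply Real.sin_nonneg_of_nonneg_of_le_pi
        · nlinarith [ht, abs_nonneg t]
        · nlinarith [ht, abs_nonneg t, h]
  rw [← h1]
  have := Real.mul_le_sin (x := π * |t|) (by positivity) (by nlinarith)
  calc 2 * |t| = 2 / π * (π * |t|) := by field_simp
    _ ≤ Real.sin (π * |t|) := this

lemma aux_dist_le_norm (θ : ℝ) :
    4 * |θ - round θ| ≤ ‖(1 : ℂ) - Complex.exp (2 * (π : ℂ) * Complex.I * (θ : ℂ))‖ := by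
  rw [aux_norm_one_sub_exp]
  set t : ℝ := θ - round θ with htdef
  have h1 : |Real.sin (π * θ)| = |Real.sin (π * t)| := by
    have : π * θ = π * t + (round θ : ℤ) * π := by rw [htdef]; push_cast; ring
    rw [this, Real.sin_add_int_mul_pi, abs_mul]
    have hone : |((-1 : ℝ)) ^ round θ| = 1 := by
      rcases Int.even_or_odd (round θ) with he | ho
      · rw [he.neg_one_zpow, abs_one]
      · rw [ho.neg_one_zpow]; norm_num
    rw [hone, one_mul]
  rw [h1]
  have := aux_two_abs_le_abs_sin (t := t) (abs_sub_round θ)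
  linarith

lemma aux_key2 (C : ℝ) (hC : 0 < C) (n : ℕ) (s w : ℝ) (M : ℕ) (hM : 1 ≤ M)
    (hMw : ((M : ℝ)) ^ 2 ≤ w)
    (hdist : C * ((M : ℝ)) ^ (-(n : ℝ)) < |s - round s|)
    (hdist' : 4 * |s - (round s : ℤ)| ≤ ‖(1 : ℂ) - Complex.exp (2 * (π : ℂ) * Complex.I * (s : ℂ))‖) :
    0 < ‖(1 : ℂ) - Complex.exp (2 * (π : ℂ) * Complex.I * (s : ℂ))‖ ∧
    16 * C ^ 2 ≤ (1 + w) ^ n * ‖(1 : ℂ) - Complex.exp (2 * (π : ℂ) * Complex.I * (s : ℂ))‖ ^ 2 := by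
  set t := ‖(1 : ℂ) - Complex.exp (2 * (π : ℂ) * Complex.I * (s : ℂ))‖ with htd
  have hM0 : (0 : ℝ) < (M : ℝ) := by exact_mod_cast Nat.lt_of_lt_of_le Nat.zero_lt_one hM
  have hMn : (0 : ℝ) < (M : ℝ) ^ n := by positivity
  have hr : ((M : ℝ)) ^ (-(n : ℝ)) = ((M : ℝ) ^ n)⁻¹ := by
    rw [← Real.rpow_natCast (M : ℝ) n, ← Real.rpow_neg hM0.le]
  rw [hr] at hdist
  have h1 : 4 * C ≤ t * (M : ℝ) ^ n := by
    have : 4 * (C * ((M : ℝ) ^ n)⁻¹) ≤ t := by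
      calc 4 * (C * ((M : ℝ) ^ n)⁻¹) ≤ 4 * |s - (round s : ℤ)| := by
            have := hdist.le
            push_cast
            nlinarith
        _ ≤ t := hdist'
    rw [← div_le_iff₀ hMn]
    calc 4 * C / (M : ℝ) ^ n = 4 * (C * ((M : ℝ) ^ n)⁻¹) := by ring
      _ ≤ t := this
  have ht : 0 < t := by nlinarith
  refine ⟨ht, ?_⟩
  have e2 : (4 * C) ^ 2 ≤ (t * (M : ℝ) ^ n) ^ 2 := by nlinarith
  have e4 : (((M : ℝ)) ^ 2) ^ n ≤ (1 + w) ^ n :=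
    pow_le_pow_left₀ (sq_nonneg _) (by nlinarith) n
  have e4' : (((M : ℝ)) ^ n) ^ 2 ≤ (1 + w) ^ n := by
    calc (((M : ℝ)) ^ n) ^ 2 = (((M : ℝ)) ^ 2) ^ n := by
          rw [← pow_mul, ← pow_mul, Nat.mul_comm]
      _ ≤ (1 + w) ^ n := e4
  nlinarith [mul_le_mul_of_nonneg_left e4' (sq_nonneg t)]

/-- solving the cohomological equation for a Diophantine rotation, stated on
the Fourier side.  An `H^n` function on `𝕋^{d'}` is represented by its Fourier coefficients
`a : ℤ^{d'} → ℂ` with `∑_k |a_k|²(1+|k|²)^n < ∞`; composition with `R_α` multiplies the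
`k`-th coefficient by `e^{2πi⟨k,α⟩}`.  Mean zero corresponds to `a 0 = 0`, and
`‖∑_{j=1}^J h∘R_α^j − J∫h‖²_{L²}` is the tsum in the second clause (Parseval). -/
theorem stmt_11 (d' : ℕ) (hd' : 1 ≤ d') (α : Fin d' → ℝ)
    (C : ℝ) (hC : 0 < C) (n : ℕ) (hn : 1 ≤ n)
    (hdio : ∀ k : Fin d' → ℤ, k ≠ 0 → ∀ l : ℤ,
      C * (((Finset.univ.sup fun i => (k i).natAbs : ℕ) : ℝ)) ^ (-(n : ℝ))
        < |(∑ i, (k i : ℝ) * α i) - (l : ℝ)|) :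
    ∃ C' > (0 : ℝ), ∃ C'' > (0 : ℝ),
      (∀ a : (Fin d' → ℤ) → ℂ, a 0 = 0 →
        Summable (fun k : Fin d' → ℤ =>
          ‖a k‖ ^ 2 * (1 + ∑ i, ((k i : ℝ)) ^ 2) ^ n) →
        ∃ b : (Fin d' → ℤ) → ℂ, b 0 = 0 ∧
          (∀ k, a k
            = b k - Complex.exp (2 * (π : ℂ) * Complex.I * ((∑ i, (k i : ℝ) * α i : ℝ) : ℂ)) * b k) ∧
          Summable (fun k : Fin d' → ℤ => ‖b k‖ ^ 2) ∧
          (∑' k : Fin d' → ℤ, ‖b k‖ ^ 2)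
            ≤ C' ^ 2 * ∑' k : Fin d' → ℤ, ‖a k‖ ^ 2 * (1 + ∑ i, ((k i : ℝ)) ^ 2) ^ n) ∧
      (∀ a : (Fin d' → ℤ) → ℂ,
        Summable (fun k : Fin d' → ℤ =>
          ‖a k‖ ^ 2 * (1 + ∑ i, ((k i : ℝ)) ^ 2) ^ n) →
        ∀ J : ℕ, 1 ≤ J →
          (∑' k : Fin d' → ℤ, (if k = 0 then (0 : ℝ) else
            ‖a k * ∑ j ∈ Finset.Icc 1 J,
              Complex.exp (2 * (π : ℂ) * Complex.I * (j : ℂ)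
                * ((∑ i, (k i : ℝ) * α i : ℝ) : ℂ))‖ ^ 2))
            ≤ C'' ^ 2 * ∑' k : Fin d' → ℤ, ‖a k‖ ^ 2 * (1 + ∑ i, ((k i : ℝ)) ^ 2) ^ n) := by
  -- notation
  have hne : Nonempty (Fin d') := ⟨⟨0, hd'⟩⟩
  set z : (Fin d' → ℤ) → ℂ := fun k =>
    Complex.exp (2 * (π : ℂ) * Complex.I * ((∑ i, (k i : ℝ) * α i : ℝ) : ℂ)) with hzd
  -- the key per-frequency estimate
  have key : ∀ k : Fin d' → ℤ, k ≠ 0 →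
      0 < ‖(1 : ℂ) - z k‖ ∧
      16 * C ^ 2 ≤ (1 + ∑ i, ((k i : ℝ)) ^ 2) ^ n * ‖(1 : ℂ) - z k‖ ^ 2 := by
    intro k hk
    set M : ℕ := (Finset.univ.sup fun i => (k i).natAbs) with hMd
    set s : ℝ := ∑ i, (k i : ℝ) * α i with hsd
    have hM1 : 1 ≤ M := by
      obtain ⟨i, hi⟩ := Function.ne_iff.mp hk
      have h1 : 1 ≤ (k i).natAbs := Int.natAbs_pos.mpr (by simpa using hi)
      exact le_trans h1 (Finset.le_sup (f := fun i => (k i).natAbs) (Finset.mem_univ i))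
    have hMw : ((M : ℝ)) ^ 2 ≤ ∑ i, ((k i : ℝ)) ^ 2 := by
      obtain ⟨i₀, -, hi₀⟩ := Finset.exists_mem_eq_sup Finset.univ
        (Finset.univ_nonempty) (fun i => (k i).natAbs)
      have : ((M : ℝ)) ^ 2 = ((k i₀ : ℝ)) ^ 2 := by
        rw [hMd, hi₀]
        rw [Nat.cast_natAbs]
        push_cast
        rw [sq_abs]
      rw [this]
      exact Finset.single_le_sum (f := fun i => ((k i : ℝ)) ^ 2)
        (fun i _ => sq_nonneg _) (Finset.mem_univ i₀)
    have hdist := hdio k hk (round s)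
    exact aux_key2 C hC n s _ M hM1 hMw (by exact_mod_cast hdist) (aux_dist_le_norm s)
  refine ⟨1 / (4 * C), by positivity, 1 / (2 * C), by positivity, ?_, ?_⟩
  · -- cohomological equation
    intro a ha0 hsum
    refine ⟨fun k => if k = 0 then 0 else a k / (1 - z k), if_pos rfl, ?_, ?_, ?_⟩
    · intro k
      by_cases hk : k = 0
      · subst hk; simp [ha0]
      · simp only [if_neg hk]
        have hne1 : (1 : ℂ) - z k ≠ 0 := by
          intro h
          have h0 := (key k hk).1
          rw [h] at h0; simp at h0
        have h2 : a k / (1 - z k) - z k * (a k / (1 - z k))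
            = a k / (1 - z k) * (1 - z k) := by ring
        rw [h2, div_mul_cancel₀ _ hne1]
    all_goals {
      have hpt : ∀ k, ‖if k = 0 then (0 : ℂ) else a k / (1 - z k)‖ ^ 2
          ≤ (1 / (4 * C)) ^ 2 * (‖a k‖ ^ 2 * (1 + ∑ i, ((k i : ℝ)) ^ 2) ^ n) := by
        intro k
        by_cases hk : k = 0
        · simp only [if_pos hk, norm_zero]
          rw [show ((0:ℝ)) ^ 2 = 0 by norm_num]
          positivity
        · simp only [if_neg hk]
          obtain ⟨ht, h16⟩ := key k hk
          rw [norm_div, div_pow]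
          rw [div_le_iff₀ (pow_pos ht 2)]
          have hq : (1 / (4 * C)) ^ 2 * ‖a k‖ ^ 2 * (16 * C ^ 2) = ‖a k‖ ^ 2 := by
            rw [div_pow, one_pow, mul_pow]
            rw [div_mul_eq_mul_div, div_mul_eq_mul_div, div_eq_iff (by positivity)]
            ring
          nlinarith [mul_le_mul_of_nonneg_left h16
            (mul_nonneg (sq_nonneg (1 / (4 * C))) (sq_nonneg ‖a k‖)), hq]
      first
      | exact Summable.of_nonneg_of_le (fun k => sq_nonneg _) hpt
          (hsum.mul_left ((1 / (4 * C)) ^ 2))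
      | calc (∑' k : Fin d' → ℤ, ‖if k = 0 then (0 : ℂ) else a k / (1 - z k)‖ ^ 2)
            ≤ ∑' k : Fin d' → ℤ, (1 / (4 * C)) ^ 2 *
                (‖a k‖ ^ 2 * (1 + ∑ i, ((k i : ℝ)) ^ 2) ^ n) :=
            Summable.tsum_le_tsum hpt (Summable.of_nonneg_of_le (fun k => sq_nonneg _) hpt
              (hsum.mul_left _)) (hsum.mul_left _)
          _ = (1 / (4 * C)) ^ 2 * ∑' k : Fin d' → ℤ,
                ‖a k‖ ^ 2 * (1 + ∑ i, ((k i : ℝ)) ^ 2) ^ n := tsum_mul_left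
    }
  · -- ergodic sums
    intro a hsum J hJ
    have hpt : ∀ k : Fin d' → ℤ, (if k = 0 then (0 : ℝ) else
        ‖a k * ∑ j ∈ Finset.Icc 1 J,
          Complex.exp (2 * (π : ℂ) * Complex.I * (j : ℂ)
            * ((∑ i, (k i : ℝ) * α i : ℝ) : ℂ))‖ ^ 2)
        ≤ (1 / (2 * C)) ^ 2 * (‖a k‖ ^ 2 * (1 + ∑ i, ((k i : ℝ)) ^ 2) ^ n) := by
      intro k
      by_cases hk : k = 0
      · rw [if_pos hk]; positivity
      · rw [if_neg hk]
        obtain ⟨ht, h16⟩ := key k hk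
        have hz1 : z k ≠ 1 := by
          intro h
          rw [h] at ht; simp at ht
        have hznorm : ‖z k‖ = 1 := by
          rw [hzd]
          simp only
          rw [show 2 * (π : ℂ) * Complex.I * ((∑ i, (k i : ℝ) * α i : ℝ) : ℂ)
              = ((2 * π * ∑ i, (k i : ℝ) * α i : ℝ) : ℂ) * Complex.I by push_cast; ring]
          rw [Complex.norm_exp]
          simp
        have hSz : (∑ j ∈ Finset.Icc 1 J,
            Complex.exp (2 * (π : ℂ) * Complex.I * (j : ℂ)
              * ((∑ i, (k i : ℝ) * α i : ℝ) : ℂ)))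
            = (z k ^ (J + 1) - z k ^ 1) / (z k - 1) := by
          rw [show Finset.Icc 1 J = Finset.Ico 1 (J + 1) by rw [Finset.Ico_add_one_right_eq_Icc]]
          rw [← geom_sum_Ico hz1 (by omega)]
          refine Finset.sum_congr rfl fun j hj => ?_
          rw [hzd]
          simp only
          rw [← Complex.exp_nat_mul]
          congr 1
          push_cast
          ring
        set S : ℂ := (z k ^ (J + 1) - z k ^ 1) / (z k - 1) with hSd
        have hSb : ‖S‖ * ‖(1 : ℂ) - z k‖ ≤ 2 := by
          rw [hSd, norm_div, norm_sub_rev (z k) 1]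
          rw [div_mul_cancel₀]
          · calc ‖z k ^ (J + 1) - z k ^ 1‖ ≤ ‖z k ^ (J + 1)‖ + ‖z k ^ 1‖ := norm_sub_le _ _
              _ = 2 := by rw [norm_pow, norm_pow, hznorm]; norm_num
          · intro h; rw [h] at ht; simp at ht
        rw [hSz]
        rw [norm_mul, mul_pow]
        have hS2 : ‖S‖ ^ 2 * (16 * C ^ 2) ≤ 4 * (1 + ∑ i, ((k i : ℝ)) ^ 2) ^ n := by
          have hp0 : (0 : ℝ) ≤ (1 + ∑ i, ((k i : ℝ)) ^ 2) ^ n := by positivity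
          have h2 : (‖S‖ * ‖(1 : ℂ) - z k‖) ^ 2 ≤ 4 := by
            nlinarith [mul_nonneg (norm_nonneg S) (norm_nonneg ((1 : ℂ) - z k))]
          nlinarith [mul_le_mul_of_nonneg_left h16 (sq_nonneg ‖S‖),
            mul_le_mul_of_nonneg_left h2 hp0]
        have hq : (1 / (2 * C)) ^ 2 * (4 * C ^ 2) = 1 := by
          rw [div_pow, one_pow, mul_pow]
          rw [div_mul_eq_mul_div, div_eq_iff (by positivity)]
          ring
        nlinarith [mul_le_mul_of_nonneg_left hS2
          (mul_nonneg (mul_nonneg (sq_nonneg (1 / (2 * C))) (sq_nonneg ‖a k‖)) (by norm_num : (0:ℝ) ≤ (1:ℝ)/4)),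
          mul_le_mul_of_nonneg_left hS2 (sq_nonneg ‖a k‖), sq_nonneg ‖a k‖, sq_nonneg ‖S‖,
          mul_nonneg (sq_nonneg ‖a k‖) (sq_nonneg ‖S‖)]
    have hG : Summable (fun k : Fin d' → ℤ => (if k = 0 then (0 : ℝ) else
        ‖a k * ∑ j ∈ Finset.Icc 1 J,
          Complex.exp (2 * (π : ℂ) * Complex.I * (j : ℂ)
            * ((∑ i, (k i : ℝ) * α i : ℝ) : ℂ))‖ ^ 2)) := by
      apply Summable.of_nonneg_of_le _ hpt (hsum.mul_left _)
      intro k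
      by_cases hk : k = 0
      · rw [if_pos hk]
      · rw [if_neg hk]; positivity
    calc (∑' k : Fin d' → ℤ, (if k = 0 then (0 : ℝ) else
          ‖a k * ∑ j ∈ Finset.Icc 1 J,
            Complex.exp (2 * (π : ℂ) * Complex.I * (j : ℂ)
              * ((∑ i, (k i : ℝ) * α i : ℝ) : ℂ))‖ ^ 2))
        ≤ ∑' k : Fin d' → ℤ, (1 / (2 * C)) ^ 2 *
            (‖a k‖ ^ 2 * (1 + ∑ i, ((k i : ℝ)) ^ 2) ^ n) :=
        Summable.tsum_le_tsum hpt hG (hsum.mul_left _)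
      _ = (1 / (2 * C)) ^ 2 * ∑' k : Fin d' → ℤ,
            ‖a k‖ ^ 2 * (1 + ∑ i, ((k i : ℝ)) ^ 2) ^ n := tsum_mul_left
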